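/- Let A = [a_1|…|a_m]^T ∈ ℝ^{m×d} be fixed with rows pairwise non-positively-parallel (a_i/‖a_i‖_∞ ≠ a_j/‖a_j‖_∞ for i ≠ j) and with last two coordinates of each a_i strictly positive. Let N_N^A be the set of balanced parametrizations whose first-layer rows are positive multiples of the corresponding a_i. Then for every B > 0 there exists C_B > 0 such that for all Γ ∈ N_N^A and g ∈ R(N_N^A) there exists Φ ∈ N_N^A with R(Φ) = g and ‖Φ − Γ‖_∞ ≤ C_B · ‖g − R(Γ)‖_{L^∞((−B,B)^d)}^{1/2}. -/

import Mathlib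

open MeasureTheory

lemma le_essSup_of_open {d : ℕ} {U V : Set (Fin d → ℝ)} (hUm : MeasurableSet U)
    (hV : IsOpen V) (hVU : V ⊆ U) (hne : V.Nonempty) {g : (Fin d → ℝ) → ℝ} {t : ℝ}
    (ht : ∀ x ∈ V, t ≤ g x) {M : ℝ} (hM : ∀ x ∈ U, g x ≤ M) :
    t ≤ essSup g (volume.restrict U) := by
  have hbdd : Filter.IsBoundedUnder (· ≤ ·) (ae (volume.restrict U)) g := by
    refine ⟨M, Filter.eventually_map.2 ?_⟩
    filter_upwards [ae_restrict_mem hUm] with x hx using hM x hx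
  refine Filter.le_limsup_of_frequently_le ?_ hbdd
  rw [MeasureTheory.frequently_ae_iff]
  intro h0
  have hV0 : volume.restrict U V = 0 := by
    refine measure_mono_null ?_ h0
    intro x hx; exact ht x hx
  rw [Measure.restrict_apply' hUm, Set.inter_eq_self_of_subset_left hVU] at hV0
  exact absurd hV0 (hV.measure_pos volume hne).ne'

lemma cont_le_essSup {d : ℕ} {U : Set (Fin d → ℝ)} (hU : IsOpen U)
    {f g : (Fin d → ℝ) → ℝ} (hf : Continuous f) (hfg : ∀ x, f x ≤ g x)
    {M : ℝ} (hM : ∀ x ∈ U, g x ≤ M) {x1 : Fin d → ℝ} (hx1 : x1 ∈ U) :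
    f x1 ≤ essSup g (volume.restrict U) := by
  refine le_of_forall_sub_le fun ε hε => ?_
  have hVo : IsOpen (U ∩ {x | f x1 - ε < f x}) :=
    hU.inter (isOpen_lt continuous_const hf)
  refine le_essSup_of_open (V := U ∩ {x | f x1 - ε < f x}) hU.measurableSet hVo
    Set.inter_subset_left ⟨x1, hx1, by simp [hε]⟩ (fun x hx => ?_) hM
  exact le_trans (le_of_lt hx.2) (hfg x)

lemma dot_add_smul_single {d : ℕ} (p y : Fin d → ℝ) (c : ℝ) (e : Fin d) :
    ∑ l, p l * (y l + c * (Pi.single e 1 : Fin d → ℝ) l) = (∑ l, p l * y l) + c * p e := by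
  have h1 : ∑ l, p l * (c * (Pi.single e 1 : Fin d → ℝ) l) = c * p e := by
    rw [Finset.sum_eq_single e]
    · simp [mul_comm]
    · intro b _ hb; simp [Pi.single_apply, hb]
    · simp
  simp [mul_add, Finset.sum_add_distrib, h1]

lemma exists_dot_ne {d n : ℕ} (b : Fin n → Fin d → ℝ) (hb : ∀ j, b j ≠ 0) :
    ∃ y : Fin d → ℝ, ∀ j, (∑ l, b j l * y l) ≠ 0 := by
  classical
  set φ : Fin n → (Fin d → ℝ) →ₗ[ℝ] ℝ :=
    fun j => ∑ l, b j l • LinearMap.proj l with hφ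
  have hφ_apply : ∀ j y, φ j y = ∑ l, b j l * y l := by
    intro j y; simp [hφ, LinearMap.sum_apply, smul_eq_mul]
  have hker : ∀ j, (LinearMap.ker (φ j)) ≠ ⊤ := by
    intro j h
    have : φ j (b j) = 0 := by
      have : b j ∈ LinearMap.ker (φ j) := by rw [h]; trivial
      simpa using this
    rw [hφ_apply] at this
    obtain ⟨l0, hl0⟩ := Function.ne_iff.1 (hb j)
    have hpos : 0 < ∑ l, b j l * b j l := by
      refine Finset.sum_pos' (fun l _ => mul_self_nonneg _) ⟨l0, Finset.mem_univ l0, ?_⟩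
      exact mul_self_pos.2 (by simpa using hl0)
    exact hpos.ne' this
  have hnull : volume (⋃ j, (LinearMap.ker (φ j) : Set (Fin d → ℝ))) = 0 :=
    measure_iUnion_null fun j => Measure.addHaar_submodule _ _ (hker j)
  have huniv : volume (Set.univ : Set (Fin d → ℝ)) ≠ 0 :=
    (isOpen_univ.measure_pos volume ⟨0, trivial⟩).ne'
  have : (Set.univ : Set (Fin d → ℝ)) ≠ ⋃ j, (LinearMap.ker (φ j) : Set (Fin d → ℝ)) := by
    intro h; rw [h] at huniv; exact huniv hnull
  obtain ⟨y, hy⟩ : ∃ y : Fin d → ℝ, y ∉ ⋃ j, (LinearMap.ker (φ j) : Set (Fin d → ℝ)) := by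
    by_contra h
    push_neg at h
    exact this (Set.eq_univ_iff_forall.2 h).symm
  refine ⟨y, fun j hj => hy ?_⟩
  exact Set.mem_iUnion.2 ⟨j, by simpa [LinearMap.mem_ker, hφ_apply] using hj⟩

lemma relu_linindep {d m : ℕ} (a : Fin m → Fin d → ℝ) (e : Fin d) (he : ∀ i, a i e ≠ 0)
    (hnp : ∀ i j, i ≠ j → ∀ μ : ℝ, a j ≠ μ • a i) (w : Fin m → ℝ)
    (hw : ∀ x : Fin d → ℝ, ∑ i, w i * max (∑ l, a i l * x l) 0 = 0) :
    ∀ i, w i = 0 := by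
  classical
  intro i
  set b : Fin m → Fin d → ℝ :=
    fun j => if j = i then a i else a j - (a j e / a i e) • a i with hb_def
  have hb : ∀ j, b j ≠ 0 := by
    intro j
    by_cases hji : j = i
    · simp only [hb_def, hji, if_pos rfl]
      intro h; exact he i (by rw [h]; rfl)
    · simp only [hb_def, if_neg hji]
      intro h
      exact hnp i j (Ne.symm hji) _ (sub_eq_zero.1 h)
  obtain ⟨y, hy⟩ := exists_dot_ne b hb
  set c0 : ℝ := (∑ l, a i l * y l) / a i e with hc0
  set s : Fin m → ℝ := fun j => (∑ l, a j l * y l) - c0 * a j e with hs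
  set r : Fin m → ℝ := fun j => (a i e)⁻¹ * a j e with hr
  have hsi : s i = 0 := by
    simp only [hs, hc0]
    field_simp [he i]
    ring
  have hri : r i = 1 := by simp only [hr]; exact inv_mul_cancel₀ (he i)
  have hsj : ∀ j, j ≠ i → s j ≠ 0 := by
    intro j hji
    have := hy j
    simp only [hb_def, if_neg hji] at this
    have hexp : (∑ l, (a j - (a j e / a i e) • a i) l * y l)
        = (∑ l, a j l * y l) - (a j e / a i e) * ∑ l, a i l * y l := by
      simp [sub_mul, Finset.sum_sub_distrib, Finset.mul_sum, mul_assoc]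
    rw [hexp] at this
    intro h0
    apply this
    simp only [hs, hc0] at h0
    linear_combination h0
  have hline : ∀ t : ℝ, ∀ j, (∑ l, a j l * (y l + (t * (a i e)⁻¹ - c0) * (Pi.single e 1 : Fin d → ℝ) l)) = s j + t * r j := by
    intro t j
    rw [dot_add_smul_single]
    simp only [hs, hr]; ring
  set ε : ℝ := Finset.univ.inf' ⟨i, Finset.mem_univ i⟩
    (fun j => if j = i then 1 else |s j| / (2 * (1 + |r j|))) with hε_def
  have hε_pos : 0 < ε := by
    rw [hε_def]
    refine (Finset.lt_inf'_iff _).2 ?_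
    intro j _
    by_cases hji : j = i
    · simp [hji]
    · simp only [if_neg hji]
      have := hsj j hji
      positivity
  have hε_le : ∀ j, j ≠ i → ε ≤ |s j| / (2 * (1 + |r j|)) := by
    intro j hji
    rw [hε_def]
    simpa [if_neg hji] using Finset.inf'_le
      (f := fun j => if j = i then 1 else |s j| / (2 * (1 + |r j|))) (Finset.mem_univ j)
  have hsign : ∀ j, j ≠ i → ∀ t : ℝ, |t| ≤ ε →
      max (s j + t * r j) 0 = max (s j) 0 + (if 0 < s j then r j else 0) * t := by
    intro j hji t ht
    have hrs : |t * r j| < |s j| := by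
      have h1 : |t * r j| ≤ ε * |r j| := by
        rw [abs_mul]; exact mul_le_mul_of_nonneg_right ht (abs_nonneg _)
      have h2 : ε * |r j| ≤ |s j| / (2 * (1 + |r j|)) * |r j| :=
        mul_le_mul_of_nonneg_right (hε_le j hji) (abs_nonneg _)
      have h3 : |s j| / (2 * (1 + |r j|)) * |r j| < |s j| := by
        rw [div_mul_eq_mul_div, div_lt_iff₀ (by positivity)]
        nlinarith [abs_nonneg (r j), abs_pos.2 (hsj j hji)]
      linarith
    rcases lt_or_gt_of_ne (hsj j hji) with hneg | hpos
    · rw [if_neg (not_lt.2 hneg.le), max_eq_right hneg.le, max_eq_right, zero_mul, add_zero]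
      have : t * r j ≤ |t * r j| := le_abs_self _
      rw [abs_of_neg hneg] at hrs
      linarith
    · rw [if_pos hpos, max_eq_left hpos.le, max_eq_left]
      · ring
      have : -(t * r j) ≤ |t * r j| := neg_le_abs _
      rw [abs_of_pos hpos] at hrs
      linarith
  set A : ℝ := ∑ j ∈ Finset.univ.erase i, w j * max (s j) 0 with hA
  set Bc : ℝ := ∑ j ∈ Finset.univ.erase i, w j * (if 0 < s j then r j else 0) with hB
  have key : ∀ t : ℝ, |t| ≤ ε → w i * max t 0 + (A + Bc * t) = 0 := by
    intro t ht
    have h0 := hw (fun l => y l + (t * (a i e)⁻¹ - c0) * (Pi.single e 1 : Fin d → ℝ) l)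
    have hsum : ∀ j : Fin m, (∑ l, a j l * (y l + (t * (a i e)⁻¹ - c0) * (Pi.single e 1 : Fin d → ℝ) l)) = s j + t * r j := hline t
    rw [show (∑ j, w j * max (∑ l, a j l * (y l + (t * (a i e)⁻¹ - c0) * (Pi.single e 1 : Fin d → ℝ) l)) 0)
        = ∑ j, w j * max (s j + t * r j) 0 from Finset.sum_congr rfl (fun j _ => by rw [hsum j])] at h0
    rw [← Finset.add_sum_erase _ _ (Finset.mem_univ i)] at h0
    rw [hsi, hri, zero_add, mul_one] at h0
    have : ∑ j ∈ Finset.univ.erase i, w j * max (s j + t * r j) 0 = A + Bc * t := by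
      rw [hA, hB, Finset.sum_mul, ← Finset.sum_add_distrib]
      refine Finset.sum_congr rfl fun j hj => ?_
      rw [hsign j (Finset.ne_of_mem_erase hj) t ht]
      ring
    rw [this] at h0
    linarith
  have h1 := key (-ε) (by rw [abs_of_neg (neg_neg_of_pos hε_pos)]; simp)
  have h2 := key (-(ε/2)) (by rw [abs_of_neg (by linarith)]; simp; linarith)
  have h3 := key ε (by rw [abs_of_pos hε_pos])
  rw [max_eq_right (by linarith : -ε ≤ 0)] at h1
  rw [max_eq_right (by linarith : -(ε/2) ≤ 0)] at h2
  rw [max_eq_left hε_pos.le] at h3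
  have hBc : Bc = 0 := by
    have := hε_pos.ne'
    nlinarith
  have hA0 : A = 0 := by rw [hBc] at h1; linarith
  rw [hBc, hA0] at h3
  have := hε_pos.ne'
  nlinarith

set_option maxHeartbeats 1000000 in
lemma core_estimate {d m : ℕ} (a : Fin m → Fin d → ℝ) (e : Fin d) (he : ∀ i, a i e ≠ 0)
    (hnp : ∀ i j, i ≠ j → ∀ μ : ℝ, a j ≠ μ • a i) {B : ℝ} (hB : 0 < B) :
    ∃ c : ℝ, 0 < c ∧ ∀ w : Fin m → ℝ, ∃ x : Fin d → ℝ,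
      (∀ l, x l ∈ Set.Ioo (-B) B) ∧
      c * ‖w‖ ≤ |∑ i, w i * max (∑ l, a i l * x l) 0| := by
  classical
  have hcont : ∀ w : Fin m → ℝ,
      Continuous (fun x : Fin d → ℝ => ∑ i, w i * max (∑ l, a i l * x l) 0) := by
    intro w
    refine continuous_finset_sum _ fun i _ => continuous_const.mul ?_
    exact (continuous_finset_sum _ fun l _ => continuous_const.mul (continuous_apply l)).max
      continuous_const
  rcases Nat.eq_zero_or_pos m with hm | hm
  · refine ⟨1, one_pos, fun w => ⟨0, fun l => by simp only [Pi.zero_apply, Set.mem_Ioo]; exact ⟨by linarith, hB⟩, ?_⟩⟩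
    subst hm
    have hw : w = 0 := Subsingleton.elim _ _
    simp [hw]
  set K : Set (Fin d → ℝ) := Metric.closedBall 0 (B / 2) with hK
  haveI : CompactSpace K := isCompact_iff_compactSpace.mp (isCompact_closedBall _ _)
  set T : (Fin m → ℝ) →ₗ[ℝ] C(K, ℝ) :=
    { toFun := fun w => ⟨fun x => ∑ i, w i * max (∑ l, a i l * x.val l) 0,
        (hcont w).comp continuous_subtype_val⟩,
      map_add' := by
        intro u v; ext x
        simp [add_mul, Finset.sum_add_distrib]
      map_smul' := by
        intro c u; ext x
        simp [Finset.mul_sum, mul_assoc] }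
  have hT_apply : ∀ w (x : K), T w x = ∑ i, w i * max (∑ l, a i l * x.val l) 0 :=
    fun w x => rfl
  have hTinj : ∀ w, T w = 0 → w = 0 := by
    intro w hw
    have hK0 : ∀ x : Fin d → ℝ, ‖x‖ ≤ B / 2 → (∑ i, w i * max (∑ l, a i l * x l) 0) = 0 := by
      intro x hx
      have : T w ⟨x, by simpa [hK, Metric.mem_closedBall, dist_eq_norm] using hx⟩ = 0 := by
        rw [hw]; rfl
      simpa [hT_apply] using this
    have hall : ∀ x : Fin d → ℝ, (∑ i, w i * max (∑ l, a i l * x l) 0) = 0 := by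
      intro x
      set t : ℝ := (B / 2) / (1 + ‖x‖) with htdef
      have hxnn : (0:ℝ) ≤ ‖x‖ := norm_nonneg x
      have ht : 0 < t := by positivity
      have hmem : ‖t • x‖ ≤ B / 2 := by
        rw [norm_smul, Real.norm_eq_abs, abs_of_pos ht, htdef]
        rw [div_mul_eq_mul_div, div_le_iff₀ (by positivity)]
        nlinarith
      have h0 := hK0 (t • x) hmem
      have hexp : (∑ i, w i * max (∑ l, a i l * (t • x) l) 0)
          = t * ∑ i, w i * max (∑ l, a i l * x l) 0 := by
        rw [Finset.mul_sum]
        refine Finset.sum_congr rfl fun i _ => ?_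
        have h1 : (∑ l, a i l * (t • x) l) = t * ∑ l, a i l * x l := by
          rw [Finset.mul_sum]
          exact Finset.sum_congr rfl fun l _ => by simp [smul_eq_mul]; ring
        have h2 : max (t * (∑ l, a i l * x l)) 0 = t * max (∑ l, a i l * x l) 0 := by
          rw [mul_max_of_nonneg _ _ ht.le, mul_zero]
        rw [h1, h2]; ring
      rw [hexp] at h0
      rcases mul_eq_zero.1 h0 with h | h
      · exact absurd h ht.ne'
      · exact h
    funext i
    exact relu_linindep a e he hnp w hall i
  haveI : Nonempty (Fin m) := ⟨⟨0, hm⟩⟩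
  have hsne : (Metric.sphere (0 : Fin m → ℝ) 1).Nonempty :=
    NormedSpace.sphere_nonempty.mpr zero_le_one
  have hTcont : Continuous T := T.continuous_of_finiteDimensional
  obtain ⟨w0, hw0mem, hw0min⟩ := (isCompact_sphere (0 : Fin m → ℝ) 1).exists_isMinOn hsne
    ((continuous_norm.comp hTcont).continuousOn)
  have hw0norm : ‖w0‖ = 1 := by simpa [mem_sphere_iff_norm] using hw0mem
  set c : ℝ := ‖T w0‖ with hc
  have hcpos : 0 < c := by
    rw [hc, norm_pos_iff]
    intro h
    have := hTinj w0 h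
    rw [this] at hw0norm
    simp at hw0norm
  refine ⟨c, hcpos, fun w => ?_⟩
  have hlow : c * ‖w‖ ≤ ‖T w‖ := by
    rcases eq_or_ne w 0 with rfl | hw0
    · simp
    · have hnw : 0 < ‖w‖ := norm_pos_iff.2 hw0
      have hv : (‖w‖⁻¹ • w) ∈ Metric.sphere (0 : Fin m → ℝ) 1 := by
        simp [norm_smul, abs_of_pos (inv_pos.2 hnw), inv_mul_cancel₀ hnw.ne']
      have h5 : c ≤ ‖T (‖w‖⁻¹ • w)‖ := hw0min hv
      rw [_root_.map_smul] at h5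
      rw [norm_smul (‖w‖⁻¹) (T w), Real.norm_eq_abs, abs_of_pos (inv_pos.2 hnw)] at h5
      calc c * ‖w‖ ≤ (‖w‖⁻¹ * ‖T w‖) * ‖w‖ := by
            exact mul_le_mul_of_nonneg_right h5 hnw.le
        _ = ‖T w‖ := by field_simp
  obtain ⟨xb, hxbK, hxbmax⟩ := (isCompact_closedBall (0 : Fin d → ℝ) (B/2)).exists_isMaxOn
    ⟨0, Metric.mem_closedBall_self (by positivity)⟩
    ((hcont w).abs.continuousOn)
  have hTle : ‖T w‖ ≤ |∑ i, w i * max (∑ l, a i l * xb l) 0| := by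
    refine (ContinuousMap.norm_le _ (abs_nonneg _)).2 fun x => ?_
    have := hxbmax x.2
    simpa [hT_apply, Real.norm_eq_abs] using this
  refine ⟨xb, fun l => ?_, le_trans hlow hTle⟩
  have hxb : ‖xb‖ ≤ B / 2 := by simpa [Metric.mem_closedBall, dist_eq_norm] using hxbK
  have : |xb l| ≤ B / 2 := le_trans (norm_le_pi_norm xb l) hxb
  rw [abs_le] at this
  constructor <;> [linarith; linarith]

lemma param_bound_aux {D : ℕ} {na lam1 lam2 : ℝ} (hna : 0 < na) (h1 : 0 < lam1) (h2 : 0 < lam2)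
    (hle : lam2 ≤ lam1) {c1 c2 : Fin D → ℝ} (hc1 : ‖c1‖ = lam1 * na) (hc2 : ‖c2‖ = lam2 * na) :
    |lam1 - lam2| * na ≤ Real.sqrt (na * ‖lam1 • c1 - lam2 • c2‖) ∧
    ‖c1 - c2‖ ≤ 3 * Real.sqrt (na * ‖lam1 • c1 - lam2 • c2‖) := by
  set δ : ℝ := ‖lam1 • c1 - lam2 • c2‖ with hδ
  have hδnn : 0 ≤ δ := norm_nonneg _
  have hn1 : ‖lam1 • c1‖ = lam1 ^ 2 * na := by
    rw [norm_smul, Real.norm_eq_abs, abs_of_pos h1, hc1]; ring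
  have hn2 : ‖lam2 • c2‖ = lam2 ^ 2 * na := by
    rw [norm_smul, Real.norm_eq_abs, abs_of_pos h2, hc2]; ring
  have hdiff : |lam1 ^ 2 * na - lam2 ^ 2 * na| ≤ δ := by
    rw [← hn1, ← hn2]; exact abs_norm_sub_norm_le _ _
  have hsq : (lam1 - lam2) ^ 2 * na ≤ δ := by
    have h3 : (lam1 - lam2) ^ 2 ≤ lam1 ^ 2 - lam2 ^ 2 := by nlinarith
    have h4 : lam1 ^ 2 * na - lam2 ^ 2 * na ≤ δ := (abs_le.1 hdiff).2
    nlinarith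
  have hlam : |lam1 - lam2| * na ≤ Real.sqrt (na * δ) := by
    rw [← Real.sqrt_sq (by positivity : (0:ℝ) ≤ |lam1 - lam2| * na)]
    apply Real.sqrt_le_sqrt
    calc (|lam1 - lam2| * na) ^ 2 = ((lam1 - lam2) ^ 2 * na) * na := by
          rw [mul_pow, sq_abs]; ring
      _ ≤ δ * na := mul_le_mul_of_nonneg_right hsq hna.le
      _ = na * δ := mul_comm _ _
  refine ⟨hlam, ?_⟩
  have hδle : δ ≤ 2 * lam1 ^ 2 * na := by
    have : δ ≤ ‖lam1 • c1‖ + ‖lam2 • c2‖ := norm_sub_le _ _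
    rw [hn1, hn2] at this
    nlinarith
  have hdecomp : c1 - c2 = lam1⁻¹ • (lam1 • c1 - lam2 • c2) + (lam2 / lam1 - 1) • c2 := by
    rw [smul_sub, smul_smul, smul_smul, inv_mul_cancel₀ h1.ne', one_smul]
    rw [sub_smul, one_smul]
    have : (lam1⁻¹ * lam2) • c2 = (lam2 / lam1) • c2 := by rw [div_eq_inv_mul]
    rw [this]
    abel
  have hterm1 : ‖lam1⁻¹ • (lam1 • c1 - lam2 • c2)‖ ≤ 2 * Real.sqrt (na * δ) := by
    rw [norm_smul, Real.norm_eq_abs, abs_of_pos (inv_pos.2 h1), ← hδ]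
    have hsq1 : (lam1⁻¹ * δ) ^ 2 ≤ 2 * (na * δ) := by
      rw [mul_pow]
      have h6 : δ ^ 2 ≤ 2 * lam1 ^ 2 * na * δ := by nlinarith
      have h7 : lam1⁻¹ ^ 2 * δ ^ 2 ≤ lam1⁻¹ ^ 2 * (2 * lam1 ^ 2 * na * δ) :=
        mul_le_mul_of_nonneg_left h6 (by positivity)
      have h8 : lam1⁻¹ ^ 2 * (2 * lam1 ^ 2 * na * δ) = 2 * (na * δ) := by
        field_simp
      linarith
    have h9 : lam1⁻¹ * δ ≤ Real.sqrt (2 * (na * δ)) := by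
      rw [← Real.sqrt_sq (by positivity : (0:ℝ) ≤ lam1⁻¹ * δ)]
      exact Real.sqrt_le_sqrt hsq1
    have h10 : Real.sqrt (2 * (na * δ)) ≤ 2 * Real.sqrt (na * δ) := by
      rw [Real.sqrt_mul (by norm_num : (0:ℝ) ≤ 2)]
      have : Real.sqrt 2 ≤ 2 := by
        nlinarith [Real.sq_sqrt (by norm_num : (0:ℝ) ≤ 2), Real.sqrt_nonneg 2]
      exact mul_le_mul_of_nonneg_right this (Real.sqrt_nonneg _)
    linarith
  have hterm2 : ‖(lam2 / lam1 - 1) • c2‖ ≤ Real.sqrt (na * δ) := by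
    rw [norm_smul, Real.norm_eq_abs, hc2]
    have habs : |lam2 / lam1 - 1| = (lam1 - lam2) / lam1 := by
      rw [abs_of_nonpos]
      · field_simp
        ring
      · rw [sub_nonpos]; exact div_le_one_of_le₀ hle h1.le
    rw [habs]
    have : (lam1 - lam2) / lam1 * (lam2 * na) ≤ (lam1 - lam2) * na := by
      rw [div_mul_eq_mul_div, div_le_iff₀ h1]
      have h11 : 0 ≤ lam1 - lam2 := by linarith
      nlinarith
    calc (lam1 - lam2) / lam1 * (lam2 * na) ≤ (lam1 - lam2) * na := this
      _ = |lam1 - lam2| * na := by rw [abs_of_nonneg (by linarith)]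
      _ ≤ Real.sqrt (na * δ) := hlam
  calc ‖c1 - c2‖ ≤ ‖lam1⁻¹ • (lam1 • c1 - lam2 • c2)‖ + ‖(lam2 / lam1 - 1) • c2‖ := by
        rw [hdecomp]; exact norm_add_le _ _
    _ ≤ 3 * Real.sqrt (na * δ) := by linarith

lemma param_bound {D : ℕ} {na lam1 lam2 : ℝ} (hna : 0 < na) (h1 : 0 < lam1) (h2 : 0 < lam2)
    {c1 c2 : Fin D → ℝ} (hc1 : ‖c1‖ = lam1 * na) (hc2 : ‖c2‖ = lam2 * na) :
    |lam1 - lam2| * na ≤ Real.sqrt (na * ‖lam1 • c1 - lam2 • c2‖) ∧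
    ‖c1 - c2‖ ≤ 3 * Real.sqrt (na * ‖lam1 • c1 - lam2 • c2‖) := by
  rcases le_total lam2 lam1 with h | h
  · exact param_bound_aux hna h1 h2 h hc1 hc2
  · have := param_bound_aux hna h2 h1 h hc2 hc1
    rw [norm_sub_rev (lam2 • c2), abs_sub_comm lam2 lam1, norm_sub_rev c2 c1] at this
    exact this

/-- Inverse stability w.r.t. the uniform norm on `(−B,B)^d` for networks with
fixed first-layer directions: on the set `𝒩^A_N` of balanced parametrizations
whose first-layer rows are positive multiples of fixed, pairwise
non-positively-parallel rows `a_i` (with strictly positive last two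
coordinates), one has uniform `(C_B, 1/2)` inverse stability w.r.t.
`‖·‖_{L^∞((−B,B)^d)}`. -/
theorem stmt_17 {d m D : ℕ} (hd : 2 ≤ d)
    (a : Fin m → Fin d → ℝ) (ha0 : ∀ i, a i ≠ 0)
    (hpar : ∀ i j, i ≠ j → ‖a i‖⁻¹ • a i ≠ ‖a j‖⁻¹ • a j)
    (hpos : ∀ i, 0 < a i ⟨d - 1, by omega⟩ ∧ 0 < a i ⟨d - 2, by omega⟩) :
    ∀ B : ℝ, 0 < B → ∃ CB : ℝ, 0 < CB ∧
      ∀ (lamΓ : Fin m → ℝ) (cΓ : Fin m → Fin D → ℝ),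
        (∀ i, 0 < lamΓ i) → (∀ i, ‖cΓ i‖ = ‖lamΓ i • a i‖) →
      ∀ (lamΘ : Fin m → ℝ) (cΘ : Fin m → Fin D → ℝ),
        (∀ i, 0 < lamΘ i) → (∀ i, ‖cΘ i‖ = ‖lamΘ i • a i‖) →
      ∃ (lamΦ : Fin m → ℝ) (cΦ : Fin m → Fin D → ℝ),
        (∀ i, 0 < lamΦ i) ∧ (∀ i, ‖cΦ i‖ = ‖lamΦ i • a i‖) ∧
        (∀ x : Fin d → ℝ, ∀ j : Fin D,
          ∑ i, cΦ i j * max (∑ l, (lamΦ i • a i) l * x l) 0 =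
            ∑ i, cΘ i j * max (∑ l, (lamΘ i • a i) l * x l) 0) ∧
        max (⨆ i, ⨆ l, |(lamΦ i • a i) l - (lamΓ i • a i) l|)
            (⨆ i, ⨆ j, |cΦ i j - cΓ i j|) ≤
          CB * Real.sqrt (essSup (fun x : Fin d → ℝ => ⨆ j : Fin D,
              |(∑ i, cΘ i j * max (∑ l, (lamΘ i • a i) l * x l) 0) -
                ∑ i, cΓ i j * max (∑ l, (lamΓ i • a i) l * x l) 0|)
            (volume.restrict {x : Fin d → ℝ | ∀ l, x l ∈ Set.Ioo (-B) B})) := by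
  classical
  intro B hB
  set e : Fin d := ⟨d - 1, by omega⟩ with he_def
  have he : ∀ i, a i e ≠ 0 := fun i => (hpos i).1.ne'
  have hnp : ∀ i j, i ≠ j → ∀ μ : ℝ, a j ≠ μ • a i := by
    intro i j hij μ h
    have hje : a j e = μ * a i e := by rw [h]; rfl
    have hμ : 0 < μ := by
      have h1 := (hpos i).1
      have h2 := (hpos j).1
      rw [hje] at h2
      nlinarith
    have hnia : 0 < ‖a i‖ := norm_pos_iff.2 (ha0 i)
    apply hpar i j hij
    rw [h, norm_smul, Real.norm_eq_abs, abs_of_pos hμ, smul_smul, mul_inv]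
    rw [mul_comm μ⁻¹, mul_assoc, inv_mul_cancel₀ hμ.ne', mul_one]
  obtain ⟨c, hcpos, hcore⟩ := core_estimate a e he hnp hB
  set U : Set (Fin d → ℝ) := {x | ∀ l, x l ∈ Set.Ioo (-B) B} with hU_def
  have hU : IsOpen U := by
    have : U = Set.pi Set.univ (fun _ => Set.Ioo (-B) B) := by
      ext x; simp [Set.mem_pi, hU_def]
    rw [this]
    exact isOpen_set_pi Set.finite_univ (fun _ _ => isOpen_Ioo)
  have h0U : (0 : Fin d → ℝ) ∈ U := by
    intro l; simp only [Pi.zero_apply, Set.mem_Ioo]; exact ⟨by linarith, hB⟩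
  set Q : ℝ := (1 + ∑ i, ‖a i‖) * c⁻¹ with hQ_def
  have hQpos : 0 < Q := by
    have : (0:ℝ) < 1 + ∑ i, ‖a i‖ := by
      have : (0:ℝ) ≤ ∑ i, ‖a i‖ := Finset.sum_nonneg fun i _ => norm_nonneg _
      linarith
    positivity
  refine ⟨3 * (1 + Real.sqrt Q), by positivity, ?_⟩
  intro lamΓ cΓ hΓpos hΓbal lamΘ cΘ hΘpos hΘbal
  refine ⟨lamΘ, cΘ, hΘpos, hΘbal, fun _ _ => rfl, ?_⟩
  -- notation
  set w : Fin D → Fin m → ℝ := fun j i => lamΘ i * cΘ i j - lamΓ i * cΓ i j with hw_def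
  have hreal : ∀ (lam : Fin m → ℝ) (cc : Fin m → Fin D → ℝ), (∀ i, 0 < lam i) →
      ∀ (x : Fin d → ℝ) (j : Fin D),
      (∑ i, cc i j * max (∑ l, (lam i • a i) l * x l) 0)
        = ∑ i, (lam i * cc i j) * max (∑ l, a i l * x l) 0 := by
    intro lam cc hlam x j
    refine Finset.sum_congr rfl fun i _ => ?_
    have h1 : (∑ l, (lam i • a i) l * x l) = lam i * ∑ l, a i l * x l := by
      rw [Finset.mul_sum]
      exact Finset.sum_congr rfl fun l _ => by simp [smul_eq_mul]; ring
    have h2 : max (lam i * (∑ l, a i l * x l)) 0 = lam i * max (∑ l, a i l * x l) 0 := by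
      rw [mul_max_of_nonneg _ _ (hlam i).le, mul_zero]
    rw [h1, h2]; ring
  have hGF : ∀ (x : Fin d → ℝ) (j : Fin D),
      ((∑ i, cΘ i j * max (∑ l, (lamΘ i • a i) l * x l) 0) -
        ∑ i, cΓ i j * max (∑ l, (lamΓ i • a i) l * x l) 0)
      = ∑ i, w j i * max (∑ l, a i l * x l) 0 := by
    intro x j
    rw [hreal lamΘ cΘ hΘpos x j, hreal lamΓ cΓ hΓpos x j, ← Finset.sum_sub_distrib]
    exact Finset.sum_congr rfl fun i _ => by rw [hw_def]; ring
  set G : (Fin d → ℝ) → ℝ := fun x => ⨆ j : Fin D,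
      |(∑ i, cΘ i j * max (∑ l, (lamΘ i • a i) l * x l) 0) -
        ∑ i, cΓ i j * max (∑ l, (lamΓ i • a i) l * x l) 0| with hG_def
  set E : ℝ := essSup G (volume.restrict U) with hE_def
  -- uniform bound for G on U
  set M : ℝ := ∑ j, ∑ i, |w j i| * ((∑ l, |a i l|) * B) with hM_def
  have hMj_nonneg : ∀ j : Fin D, 0 ≤ ∑ i, |w j i| * ((∑ l, |a i l|) * B) := by
    intro j
    refine Finset.sum_nonneg fun i _ => ?_
    have : (0:ℝ) ≤ ∑ l, |a i l| := Finset.sum_nonneg fun l _ => abs_nonneg _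
    positivity
  have hFj_bound : ∀ (j : Fin D) (x : Fin d → ℝ), x ∈ U →
      |∑ i, w j i * max (∑ l, a i l * x l) 0| ≤ ∑ i, |w j i| * ((∑ l, |a i l|) * B) := by
    intro j x hx
    calc |∑ i, w j i * max (∑ l, a i l * x l) 0|
        ≤ ∑ i, |w j i * max (∑ l, a i l * x l) 0| := Finset.abs_sum_le_sum_abs _ _
      _ ≤ ∑ i, |w j i| * ((∑ l, |a i l|) * B) := by
          refine Finset.sum_le_sum fun i _ => ?_
          rw [abs_mul]
          refine mul_le_mul_of_nonneg_left ?_ (abs_nonneg _)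
          have hmx : |max (∑ l, a i l * x l) 0| ≤ |∑ l, a i l * x l| := by
            rcases le_total (∑ l, a i l * x l) 0 with h | h
            · rw [max_eq_right h, abs_zero]; exact abs_nonneg _
            · rw [max_eq_left h]
          refine le_trans hmx ?_
          calc |∑ l, a i l * x l| ≤ ∑ l, |a i l * x l| := Finset.abs_sum_le_sum_abs _ _
            _ ≤ ∑ l, |a i l| * B := by
                refine Finset.sum_le_sum fun l _ => ?_
                rw [abs_mul]
                refine mul_le_mul_of_nonneg_left ?_ (abs_nonneg _)
                have := hx l
                rw [Set.mem_Ioo] at this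
                rw [abs_le]; constructor <;> linarith [this.1, this.2]
            _ = (∑ l, |a i l|) * B := by rw [Finset.sum_mul]
  have hGM : ∀ x ∈ U, G x ≤ M := by
    intro x hx
    rw [hG_def, hM_def]
    refine Real.iSup_le (fun j => ?_) (Finset.sum_nonneg fun j _ => hMj_nonneg j)
    rw [hGF x j]
    refine le_trans (hFj_bound j x hx) ?_
    exact Finset.single_le_sum (fun j _ => hMj_nonneg j) (Finset.mem_univ j)
  have hG_nonneg : ∀ x, (0:ℝ) ≤ G x := fun x =>
    Real.iSup_nonneg fun j => abs_nonneg _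
  have hE0 : 0 ≤ E := by
    rw [hE_def]
    exact cont_le_essSup hU continuous_const (fun x => hG_nonneg x) hGM h0U
  -- key estimate : components of w are controlled by E
  have hFj_cont : ∀ j : Fin D, Continuous fun x : Fin d → ℝ =>
      |∑ i, w j i * max (∑ l, a i l * x l) 0| := by
    intro j
    refine Continuous.abs ?_
    refine continuous_finset_sum _ fun i _ => continuous_const.mul ?_
    exact (continuous_finset_sum _ fun l _ => continuous_const.mul (continuous_apply l)).max
      continuous_const
  have hwE : ∀ j : Fin D, ‖w j‖ ≤ c⁻¹ * E := by
    intro j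
    obtain ⟨x, hxU, hx⟩ := hcore (w j)
    have hxU' : x ∈ U := hxU
    have hFE : |∑ i, w j i * max (∑ l, a i l * x l) 0| ≤ E := by
      rw [hE_def]
      refine cont_le_essSup hU (hFj_cont j) (fun y => ?_) hGM hxU'
      rw [hG_def, ← hGF y j]
      have hbdd : BddAbove (Set.range fun j : Fin D =>
          |(∑ i, cΘ i j * max (∑ l, (lamΘ i • a i) l * y l) 0) -
            ∑ i, cΓ i j * max (∑ l, (lamΓ i • a i) l * y l) 0|) :=
        Set.Finite.bddAbove (Set.finite_range _)
      exact le_ciSup hbdd j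
    have := le_trans hx hFE
    rw [← le_div_iff₀' hcpos] at this
    rw [div_eq_inv_mul] at this
    exact this
  -- per-neuron parameter estimates
  have hδ : ∀ i, ‖lamΘ i • cΘ i - lamΓ i • cΓ i‖ ≤ c⁻¹ * E := by
    intro i
    have hnn : (0:ℝ) ≤ c⁻¹ * E := by positivity
    rw [pi_norm_le_iff_of_nonneg hnn]
    intro j
    have : (lamΘ i • cΘ i - lamΓ i • cΓ i) j = w j i := by
      simp [hw_def, smul_eq_mul]
    rw [this, Real.norm_eq_abs]
    exact le_trans (norm_le_pi_norm (w j) i) (hwE j)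
  have hna : ∀ i, 0 < ‖a i‖ := fun i => norm_pos_iff.2 (ha0 i)
  have hbalΘ : ∀ i, ‖cΘ i‖ = lamΘ i * ‖a i‖ := by
    intro i
    rw [hΘbal i, norm_smul, Real.norm_eq_abs, abs_of_pos (hΘpos i)]
  have hbalΓ : ∀ i, ‖cΓ i‖ = lamΓ i * ‖a i‖ := by
    intro i
    rw [hΓbal i, norm_smul, Real.norm_eq_abs, abs_of_pos (hΓpos i)]
  have hmain : ∀ i, |lamΘ i - lamΓ i| * ‖a i‖ ≤ Real.sqrt Q * Real.sqrt E ∧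
      ‖cΘ i - cΓ i‖ ≤ 3 * (Real.sqrt Q * Real.sqrt E) := by
    intro i
    obtain ⟨hp1, hp2⟩ := param_bound (hna i) (hΘpos i) (hΓpos i) (hbalΘ i) (hbalΓ i)
    have hprod : ‖a i‖ * ‖lamΘ i • cΘ i - lamΓ i • cΓ i‖ ≤ Q * E := by
      have h1 : ‖a i‖ * ‖lamΘ i • cΘ i - lamΓ i • cΓ i‖ ≤ ‖a i‖ * (c⁻¹ * E) :=
        mul_le_mul_of_nonneg_left (hδ i) (hna i).le
      have h2 : ‖a i‖ ≤ 1 + ∑ i, ‖a i‖ := by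
        have := Finset.single_le_sum (f := fun i => ‖a i‖)
          (fun i _ => norm_nonneg _) (Finset.mem_univ i)
        linarith
      have h3 : ‖a i‖ * (c⁻¹ * E) ≤ (1 + ∑ i, ‖a i‖) * (c⁻¹ * E) := by
        refine mul_le_mul_of_nonneg_right h2 (by positivity)
      rw [hQ_def]
      calc ‖a i‖ * ‖lamΘ i • cΘ i - lamΓ i • cΓ i‖ ≤ ‖a i‖ * (c⁻¹ * E) := h1
        _ ≤ (1 + ∑ i, ‖a i‖) * (c⁻¹ * E) := h3
        _ = (1 + ∑ i, ‖a i‖) * c⁻¹ * E := by ring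
    have hsqrt : Real.sqrt (‖a i‖ * ‖lamΘ i • cΘ i - lamΓ i • cΓ i‖)
        ≤ Real.sqrt Q * Real.sqrt E := by
      rw [← Real.sqrt_mul hQpos.le]
      exact Real.sqrt_le_sqrt hprod
    exact ⟨le_trans hp1 hsqrt, le_trans hp2 (by linarith)⟩
  -- conclude
  have hCBE : (0:ℝ) ≤ 3 * (1 + Real.sqrt Q) * Real.sqrt E := by positivity
  refine max_le ?_ ?_
  · refine Real.iSup_le (fun i => Real.iSup_le (fun l => ?_) hCBE) hCBE
    have h1 : |(lamΘ i • a i) l - (lamΓ i • a i) l| = |lamΘ i - lamΓ i| * |a i l| := by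
      rw [← abs_mul]
      congr 1
      simp [smul_eq_mul]
      ring
    have h2 : |a i l| ≤ ‖a i‖ := by
      have := norm_le_pi_norm (a i) l
      simpa [Real.norm_eq_abs] using this
    have h3 : |lamΘ i - lamΓ i| * |a i l| ≤ |lamΘ i - lamΓ i| * ‖a i‖ :=
      mul_le_mul_of_nonneg_left h2 (abs_nonneg _)
    have h4 := (hmain i).1
    have h5 : Real.sqrt Q * Real.sqrt E ≤ 3 * (1 + Real.sqrt Q) * Real.sqrt E := by
      have hq : Real.sqrt Q ≤ 3 * (1 + Real.sqrt Q) := by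
        nlinarith [Real.sqrt_nonneg Q]
      exact mul_le_mul_of_nonneg_right hq (Real.sqrt_nonneg _)
    rw [h1]
    linarith
  · refine Real.iSup_le (fun i => Real.iSup_le (fun j => ?_) hCBE) hCBE
    have h2 : |cΘ i j - cΓ i j| ≤ ‖cΘ i - cΓ i‖ := by
      have := norm_le_pi_norm (cΘ i - cΓ i) j
      simpa [Real.norm_eq_abs] using this
    have h4 := (hmain i).2
    have h5 : 3 * (Real.sqrt Q * Real.sqrt E) ≤ 3 * (1 + Real.sqrt Q) * Real.sqrt E := by
      have hq : 3 * Real.sqrt Q ≤ 3 * (1 + Real.sqrt Q) := by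
        nlinarith [Real.sqrt_nonneg Q]
      nlinarith [Real.sqrt_nonneg E, Real.sqrt_nonneg Q]
    linarith
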